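/- Let T be a standard Young tableau of rectangular shape 4×b and 1 ≤ i ≤ 3. Then the anti-exceedance set Aexc(prom_i(T)) = { e : prom_i(T)^{-1}(e) > e } equals the set of entries of T lying in the first i rows. -/
import Mathlib



/-- `IsSYT a b T` says that `T` (restricted to the rectangular grid
`{0,…,a−1} × {0,…,b−1}`, rows indexed from the top and columns from the left) is a
standard Young tableau of rectangular shape `a × b`: a filling by the numbers
`1,…,ab`, each used exactly once, strictly increasing along each row and down each
column. -/
def IsSYT (a b : ℕ) (T : ℕ → ℕ → ℕ) : Prop :=
  (∀ i j, i < a → j < b → 1 ≤ T i j ∧ T i j ≤ a * b) ∧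
  (∀ k, 1 ≤ k → k ≤ a * b → ∃! p : ℕ × ℕ, p.1 < a ∧ p.2 < b ∧ T p.1 p.2 = k) ∧
  (∀ i j j', i < a → j < j' → j' < b → T i j < T i j') ∧
  (∀ i i' j, i < i' → i' < a → j < b → T i j < T i' j)

/-- One step of the jeu-de-taquin slide used in promotion: from a cell of the `a × b`
grid, move to the neighbour to the right or below carrying the smaller entry of `T`
(moving straight if only one of the two neighbours exists, and staying put at the
bottom-right corner). -/
def slideNext (a b : ℕ) (T : ℕ → ℕ → ℕ) (c : ℕ × ℕ) : ℕ × ℕ :=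
  if c.1 + 1 < a then
    if c.2 + 1 < b then
      if T (c.1 + 1) c.2 < T c.1 (c.2 + 1) then (c.1 + 1, c.2) else (c.1, c.2 + 1)
    else (c.1 + 1, c.2)
  else if c.2 + 1 < b then (c.1, c.2 + 1) else c

open Classical in
/-- Schützenberger promotion on fillings of the `a × b` grid: delete the entry `1`
(which for a standard tableau sits in the top-left cell `(0,0)`), slide the empty box
along the jeu-de-taquin path determined by `slideNext` until it reaches the
bottom-right corner, fill that corner with `ab + 1`, and subtract `1` from every
entry.  Cells outside the grid are left unchanged. -/
noncomputable def promo (a b : ℕ) (T : ℕ → ℕ → ℕ) : ℕ → ℕ → ℕ := fun i j =>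
  if i < a ∧ j < b then
    if i = a - 1 ∧ j = b - 1 then a * b
    else if ∃ t : ℕ, (slideNext a b T)^[t] (0, 0) = (i, j) then
      T (slideNext a b T (i, j)).1 (slideNext a b T (i, j)).2 - 1
    else T i j - 1
  else T i j

/-- Evacuation realized as rotate-and-complement:
`E(T)(i,j) = ab + 1 − T(a−1−i, b−1−j)` on the grid (0-indexed). -/
def evac (a b : ℕ) (T : ℕ → ℕ → ℕ) : ℕ → ℕ → ℕ := fun i j =>
  if i < a ∧ j < b then a * b + 1 - T (a - 1 - i) (b - 1 - j) else T i j

/-- `promoPermSpec a b i T σ` says that `σ` realizes the `i`-th promotion permutation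
`prom_i(T)` of a rectangular standard Young tableau `T` of shape `a × b` (rows of the
tableau are 0-indexed here, so the paper's rows `i` and `i+1` are rows `i−1` and `i`):
`σ` restricts to a bijection of `{1,…,ab}`, and for each `j ∈ {1,…,ab}` there is a step
`t` of the promotion slide path of `P^{j−1}(T)` at which the path moves down from row
`i−1` to row `i` — the entry `p^{i,j}` carried up at that step is the value of
`P^{j−1}(T)` at the cell below — and `σ(j) ≡ p^{i,j} + j − 1 (mod ab)`. -/
def promoPermSpec (a b i : ℕ) (T : ℕ → ℕ → ℕ) (σ : ℕ → ℕ) : Prop :=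
  Set.BijOn σ (Set.Icc 1 (a * b)) (Set.Icc 1 (a * b)) ∧
  ∀ j ∈ Set.Icc 1 (a * b), ∃ t : ℕ,
    (slideNext a b ((promo a b)^[j - 1] T)
        ((slideNext a b ((promo a b)^[j - 1] T))^[t] (0, 0))).1
      = ((slideNext a b ((promo a b)^[j - 1] T))^[t] (0, 0)).1 + 1 ∧
    ((slideNext a b ((promo a b)^[j - 1] T))^[t] (0, 0)).1 + 1 = i ∧
    σ j ≡ ((promo a b)^[j - 1] T) i
        ((slideNext a b ((promo a b)^[j - 1] T))^[t] (0, 0)).2 + j - 1 [MOD a * b]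


section Aux

variable {a b : ℕ} {U : ℕ → ℕ → ℕ}

def pth (a b : ℕ) (U : ℕ → ℕ → ℕ) (t : ℕ) : ℕ × ℕ := (slideNext a b U)^[t] (0, 0)

lemma pth_zero : pth a b U 0 = (0, 0) := rfl

lemma pth_succ (t : ℕ) : pth a b U (t + 1) = slideNext a b U (pth a b U t) :=
  Function.iterate_succ_apply' _ _ _

lemma slideNext_spec {c : ℕ × ℕ} (hc1 : c.1 < a) (hc2 : c.2 < b) :
    (c.1 + 1 < a ∧ slideNext a b U c = (c.1 + 1, c.2)) ∨
    (c.2 + 1 < b ∧ slideNext a b U c = (c.1, c.2 + 1)) ∨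
    (c.1 + 1 = a ∧ c.2 + 1 = b ∧ slideNext a b U c = c) := by
  unfold slideNext
  by_cases h1 : c.1 + 1 < a
  · by_cases h2 : c.2 + 1 < b
    · by_cases h3 : U (c.1 + 1) c.2 < U c.1 (c.2 + 1)
      · exact Or.inl ⟨h1, by rw [if_pos h1, if_pos h2, if_pos h3]⟩
      · exact Or.inr (Or.inl ⟨h2, by rw [if_pos h1, if_pos h2, if_neg h3]⟩)
    · exact Or.inl ⟨h1, by rw [if_pos h1, if_neg h2]⟩
  · by_cases h2 : c.2 + 1 < b
    · exact Or.inr (Or.inl ⟨h2, by rw [if_neg h1, if_pos h2]⟩)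
    · exact Or.inr (Or.inr ⟨by omega, by omega, by rw [if_neg h1, if_neg h2]⟩)

lemma slideNext_mem {c : ℕ × ℕ} (hc1 : c.1 < a) (hc2 : c.2 < b) :
    (slideNext a b U c).1 < a ∧ (slideNext a b U c).2 < b := by
  rcases slideNext_spec (U := U) hc1 hc2 with ⟨h, e⟩ | ⟨h, e⟩ | ⟨h1, h2, e⟩ <;>
    rw [e] <;> exact ⟨by omega, by omega⟩

lemma slideNext_sum {c : ℕ × ℕ} (hc1 : c.1 < a) (hc2 : c.2 < b)
    (hne : ¬(c.1 = a - 1 ∧ c.2 = b - 1)) :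
    (slideNext a b U c).1 + (slideNext a b U c).2 = c.1 + c.2 + 1 := by
  rcases slideNext_spec (U := U) hc1 hc2 with ⟨h, e⟩ | ⟨h, e⟩ | ⟨h1, h2, e⟩ <;>
    rw [e] <;> [skip; skip; exact absurd ⟨by omega, by omega⟩ hne] <;> omega

lemma slideNext_corner (ha : 0 < a) (hb : 0 < b) :
    slideNext a b U (a - 1, b - 1) = (a - 1, b - 1) := by
  unfold slideNext
  have h1 : ¬(((a - 1, b - 1) : ℕ × ℕ).1 + 1 < a) := by simp; omega
  have h2 : ¬(((a - 1, b - 1) : ℕ × ℕ).2 + 1 < b) := by simp; omega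
  rw [if_neg h1, if_neg h2]

lemma slideNext_fixed {c : ℕ × ℕ} (hc1 : c.1 < a) (hc2 : c.2 < b)
    (h : slideNext a b U c = c) : c.1 = a - 1 ∧ c.2 = b - 1 := by
  rcases slideNext_spec (U := U) hc1 hc2 with ⟨h', e⟩ | ⟨h', e⟩ | ⟨h1, h2, e⟩
  · rw [e] at h; have := congrArg Prod.fst h; simp at this
  · rw [e] at h; have := congrArg Prod.snd h; simp at this
  · exact ⟨by omega, by omega⟩

lemma pth_mem (ha : 0 < a) (hb : 0 < b) (t : ℕ) :
    (pth a b U t).1 < a ∧ (pth a b U t).2 < b := by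
  induction t with
  | zero => exact ⟨ha, hb⟩
  | succ t ih => rw [pth_succ]; exact slideNext_mem ih.1 ih.2

lemma pth_sum (ha : 0 < a) (hb : 0 < b) :
    ∀ t, t ≤ a + b - 2 → (pth a b U t).1 + (pth a b U t).2 = t := by
  intro t
  induction t with
  | zero => intro _; rfl
  | succ t ih =>
    intro ht
    have ih' := ih (by omega)
    have hmem := pth_mem (U := U) ha hb t
    have hne : ¬((pth a b U t).1 = a - 1 ∧ (pth a b U t).2 = b - 1) := by omega
    rw [pth_succ, slideNext_sum hmem.1 hmem.2 hne, ih']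

lemma pth_corner (ha : 0 < a) (hb : 0 < b) :
    ∀ t, a + b - 2 ≤ t → pth a b U t = (a - 1, b - 1) := by
  have base : pth a b U (a + b - 2) = (a - 1, b - 1) := by
    have hs := pth_sum (U := U) ha hb (a + b - 2) le_rfl
    have hm := pth_mem (U := U) ha hb (a + b - 2)
    have h1 : (pth a b U (a + b - 2)).1 = a - 1 := by omega
    have h2 : (pth a b U (a + b - 2)).2 = b - 1 := by omega
    exact Prod.ext h1 h2
  intro t ht
  induction t, ht using Nat.le_induction with
  | base => exact base
  | succ t ht ih => rw [pth_succ, ih]; exact slideNext_corner ha hb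

lemma pth_row_step (ha : 0 < a) (hb : 0 < b) (t : ℕ) :
    (pth a b U (t + 1)).1 = (pth a b U t).1 ∨
      (pth a b U (t + 1)).1 = (pth a b U t).1 + 1 := by
  have hmem := pth_mem (U := U) ha hb t
  rw [pth_succ]
  rcases slideNext_spec (U := U) hmem.1 hmem.2 with ⟨h, e⟩ | ⟨h, e⟩ | ⟨h1, h2, e⟩ <;>
    rw [e] <;> simp

lemma pth_col_step (ha : 0 < a) (hb : 0 < b) (t : ℕ) :
    (pth a b U (t + 1)).2 = (pth a b U t).2 ∨
      (pth a b U (t + 1)).2 = (pth a b U t).2 + 1 := by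
  have hmem := pth_mem (U := U) ha hb t
  rw [pth_succ]
  rcases slideNext_spec (U := U) hmem.1 hmem.2 with ⟨h, e⟩ | ⟨h, e⟩ | ⟨h1, h2, e⟩ <;>
    rw [e] <;> simp

lemma pth_row_mono (ha : 0 < a) (hb : 0 < b) {s t : ℕ} (h : s ≤ t) :
    (pth a b U s).1 ≤ (pth a b U t).1 := by
  induction t, h using Nat.le_induction with
  | base => exact le_rfl
  | succ t ht ih => rcases pth_row_step (U := U) ha hb t with h' | h' <;> omega

lemma pth_col_mono (ha : 0 < a) (hb : 0 < b) {s t : ℕ} (h : s ≤ t) :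
    (pth a b U s).2 ≤ (pth a b U t).2 := by
  induction t, h using Nat.le_induction with
  | base => exact le_rfl
  | succ t ht ih => rcases pth_col_step (U := U) ha hb t with h' | h' <;> omega

lemma crossing_unique (ha : 0 < a) (hb : 0 < b) {t t' : ℕ}
    (h1 : (pth a b U (t + 1)).1 = (pth a b U t).1 + 1)
    (h2 : (pth a b U (t' + 1)).1 = (pth a b U t').1 + 1)
    (h3 : (pth a b U t).1 = (pth a b U t').1) : t = t' := by
  rcases lt_trichotomy t t' with h | h | h
  · have := pth_row_mono (U := U) ha hb (show t + 1 ≤ t' from h); omega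
  · exact h
  · have := pth_row_mono (U := U) ha hb (show t' + 1 ≤ t from h); omega

end Aux

section Aux2

variable {a b : ℕ} {U : ℕ → ℕ → ℕ}

lemma syt_inj (hU : IsSYT a b U) {x y x' y' : ℕ} (hx : x < a) (hy : y < b)
    (hx' : x' < a) (hy' : y' < b) (h : U x y = U x' y') : x = x' ∧ y = y' := by
  have h1 := hU.1 x y hx hy
  have h2 := (hU.2.1 (U x y) h1.1 h1.2).unique (y₁ := (x, y)) (y₂ := (x', y'))
    ⟨hx, hy, rfl⟩ ⟨hx', hy', h.symm⟩
  exact ⟨congrArg Prod.fst h2, congrArg Prod.snd h2⟩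

open Classical in
noncomputable def cellOf (a b : ℕ) (U : ℕ → ℕ → ℕ) (m : ℕ) : ℕ × ℕ :=
  if h : ∃ p : ℕ × ℕ, p.1 < a ∧ p.2 < b ∧ U p.1 p.2 = m then h.choose else (0, 0)

lemma cellOf_spec (hU : IsSYT a b U) {m : ℕ} (h1 : 1 ≤ m) (h2 : m ≤ a * b) :
    (cellOf a b U m).1 < a ∧ (cellOf a b U m).2 < b ∧
      U (cellOf a b U m).1 (cellOf a b U m).2 = m := by
  have hex := (hU.2.1 m h1 h2).exists
  rw [cellOf, dif_pos hex]
  exact hex.choose_spec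

lemma cellOf_eq (hU : IsSYT a b U) {m x y : ℕ} (hx : x < a) (hy : y < b)
    (hv : U x y = m) : cellOf a b U m = (x, y) := by
  have h1 := hU.1 x y hx hy
  rw [hv] at h1
  obtain ⟨g1, g2, g3⟩ := cellOf_spec hU h1.1 h1.2
  exact (hU.2.1 m h1.1 h1.2).unique ⟨g1, g2, g3⟩ ⟨hx, hy, hv⟩

lemma syt_one (ha : 0 < a) (hb : 0 < b) (hU : IsSYT a b U) : U 0 0 = 1 := by
  have hn : 1 ≤ a * b := Nat.mul_pos ha hb
  obtain ⟨hx, hy, hv⟩ := cellOf_spec hU le_rfl hn (m := 1)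
  rcases Nat.eq_zero_or_pos (cellOf a b U 1).1 with h0 | h0
  · rcases Nat.eq_zero_or_pos (cellOf a b U 1).2 with h0' | h0'
    · rw [h0, h0'] at hv; exact hv
    · have hlt := hU.2.2.1 (cellOf a b U 1).1 ((cellOf a b U 1).2 - 1) (cellOf a b U 1).2
        hx (by omega) hy
      have hge := (hU.1 (cellOf a b U 1).1 ((cellOf a b U 1).2 - 1) hx (by omega)).1
      omega
  · have hlt := hU.2.2.2 ((cellOf a b U 1).1 - 1) (cellOf a b U 1).1 (cellOf a b U 1).2
      (by omega) hx hy
    have hge := (hU.1 ((cellOf a b U 1).1 - 1) (cellOf a b U 1).2 (by omega) hy).1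
    omega

lemma syt_two (ha : 0 < a) (hb : 0 < b) (hU : IsSYT a b U) {x y : ℕ}
    (hx : x < a) (hy : y < b) (hne : ¬(x = 0 ∧ y = 0)) : 2 ≤ U x y := by
  have h1 := hU.1 x y hx hy
  by_contra h
  push_neg at h
  have heq : U x y = U 0 0 := by rw [syt_one ha hb hU]; omega
  have := syt_inj hU hx hy ha hb heq
  omega

open Classical in
noncomputable def nxt (a b : ℕ) (U : ℕ → ℕ → ℕ) (c : ℕ × ℕ) : ℕ × ℕ :=
  if ∃ t, (slideNext a b U)^[t] (0, 0) = c then slideNext a b U c else c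

lemma nxt_onPath {c : ℕ × ℕ} (h : ∃ t, pth a b U t = c) :
    nxt a b U c = slideNext a b U c := if_pos h

lemma nxt_offPath {c : ℕ × ℕ} (h : ¬∃ t, pth a b U t = c) :
    nxt a b U c = c := if_neg h

lemma promo_corner (ha : 0 < a) (hb : 0 < b) :
    promo a b U (a - 1) (b - 1) = a * b := by
  unfold promo
  rw [if_pos ⟨by omega, by omega⟩, if_pos ⟨rfl, rfl⟩]

lemma promo_nxt {c : ℕ × ℕ} (hc1 : c.1 < a) (hc2 : c.2 < b)
    (hne : ¬(c.1 = a - 1 ∧ c.2 = b - 1)) :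
    promo a b U c.1 c.2 = U (nxt a b U c).1 (nxt a b U c).2 - 1 := by
  obtain ⟨x, y⟩ := c
  unfold promo nxt
  rw [if_pos ⟨hc1, hc2⟩, if_neg hne]
  by_cases h : ∃ t, (slideNext a b U)^[t] (0, 0) = ((x, y) : ℕ × ℕ)
  · rw [if_pos h, if_pos h]
  · rw [if_neg h, if_neg h]

lemma nxt_grid {c : ℕ × ℕ} (hc1 : c.1 < a) (hc2 : c.2 < b) :
    (nxt a b U c).1 < a ∧ (nxt a b U c).2 < b := by
  unfold nxt
  split_ifs with h
  · exact slideNext_mem hc1 hc2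
  · exact ⟨hc1, hc2⟩

lemma nxt_ne_zero (ha : 0 < a) (hb : 0 < b) {c : ℕ × ℕ} (hc1 : c.1 < a) (hc2 : c.2 < b)
    (hne : ¬(c.1 = a - 1 ∧ c.2 = b - 1)) : ¬((nxt a b U c).1 = 0 ∧ (nxt a b U c).2 = 0) := by
  by_cases h : ∃ t, pth a b U t = c
  · rw [nxt_onPath h]
    have := slideNext_sum (U := U) hc1 hc2 hne
    omega
  · rw [nxt_offPath h]
    intro hz
    exact h ⟨0, Prod.ext (by rw [pth_zero]; omega) (by rw [pth_zero]; omega)⟩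

lemma onPath_lt {c : ℕ × ℕ} (ha : 0 < a) (hb : 0 < b) {s : ℕ} (hs : pth a b U s = c)
    (hne : ¬(c.1 = a - 1 ∧ c.2 = b - 1)) : s < a + b - 2 := by
  by_contra h
  push_neg at h
  rw [pth_corner ha hb s h] at hs
  exact hne ⟨by rw [← hs], by rw [← hs]⟩

lemma nxt_inj (ha : 0 < a) (hb : 0 < b) {c d : ℕ × ℕ}
    (hc1 : c.1 < a) (hc2 : c.2 < b) (hcne : ¬(c.1 = a - 1 ∧ c.2 = b - 1))
    (hd1 : d.1 < a) (hd2 : d.2 < b) (hdne : ¬(d.1 = a - 1 ∧ d.2 = b - 1))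
    (h : nxt a b U c = nxt a b U d) : c = d := by
  by_cases hc : ∃ s, pth a b U s = c <;> by_cases hd : ∃ s, pth a b U s = d
  · obtain ⟨s, hs⟩ := hc
    obtain ⟨u, hu⟩ := hd
    rw [nxt_onPath ⟨s, hs⟩, nxt_onPath ⟨u, hu⟩] at h
    have hsl := onPath_lt (U := U) ha hb hs hcne
    have hul := onPath_lt (U := U) ha hb hu hdne
    have hcs : c.1 + c.2 = s := by rw [← hs]; exact pth_sum ha hb s (by omega)
    have hus : d.1 + d.2 = u := by rw [← hu]; exact pth_sum ha hb u (by omega)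
    have h1 := slideNext_sum (U := U) hc1 hc2 hcne
    have h2 := slideNext_sum (U := U) hd1 hd2 hdne
    rw [h] at h1
    have : s = u := by omega
    rw [← hs, ← hu, this]
  · rw [nxt_onPath hc, nxt_offPath hd] at h
    obtain ⟨s, hs⟩ := hc
    exact absurd ⟨s + 1, by rw [pth_succ, hs, h]⟩ hd
  · rw [nxt_offPath hc, nxt_onPath hd] at h
    obtain ⟨u, hu⟩ := hd
    exact absurd ⟨u + 1, by rw [pth_succ, hu, ← h]⟩ hc
  · rw [nxt_offPath hc, nxt_offPath hd] at h
    exact h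

lemma nxt_surj (ha : 0 < a) (hb : 0 < b) {d : ℕ × ℕ} (hd1 : d.1 < a) (hd2 : d.2 < b)
    (hd0 : ¬(d.1 = 0 ∧ d.2 = 0)) :
    ∃ c : ℕ × ℕ, (c.1 < a ∧ c.2 < b) ∧ ¬(c.1 = a - 1 ∧ c.2 = b - 1) ∧ nxt a b U c = d := by
  by_cases hp : ∃ s, pth a b U s = d
  · obtain ⟨s, hs⟩ := hp
    have hs0 : s ≠ 0 := by
      rintro rfl
      rw [pth_zero] at hs
      exact hd0 ⟨by rw [← hs], by rw [← hs]⟩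
    obtain ⟨u, rfl⟩ := Nat.exists_eq_succ_of_ne_zero hs0
    by_cases hfix : pth a b U u = d
    · -- d is a fixed point: d is the corner
      have hdfix : slideNext a b U d = d := by rw [← hfix, ← pth_succ, hs, hfix]
      have hcor := slideNext_fixed (U := U) hd1 hd2 hdfix
      have hab : 3 ≤ a + b := by
        by_contra hc
        push_neg at hc
        exact hd0 ⟨by omega, by omega⟩
      refine ⟨pth a b U (a + b - 3), pth_mem ha hb _, ?_, ?_⟩
      · intro hcc
        have hsum := pth_sum (U := U) ha hb (a + b - 3) (by omega)
        omega
      · rw [nxt_onPath ⟨a + b - 3, rfl⟩, ← pth_succ,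
          show a + b - 3 + 1 = a + b - 2 from by omega, pth_corner ha hb _ le_rfl]
        exact Prod.ext (by omega) (by omega)
    · refine ⟨pth a b U u, pth_mem ha hb _, ?_, ?_⟩
      · intro hcc
        apply hfix
        have : pth a b U u = (a - 1, b - 1) := Prod.ext hcc.1 hcc.2
        rw [this, ← hs, pth_succ, this, slideNext_corner ha hb]
      · rw [nxt_onPath ⟨u, rfl⟩, ← pth_succ]; exact hs
  · refine ⟨d, ⟨hd1, hd2⟩, ?_, nxt_offPath hp⟩
    intro hcc
    exact hp ⟨a + b - 2, by rw [pth_corner ha hb _ le_rfl]; exact (Prod.ext hcc.1 hcc.2).symm⟩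

end Aux2

section Aux3

variable {a b : ℕ} {U : ℕ → ℕ → ℕ}

lemma slideNext_gt (hU : IsSYT a b U) {c : ℕ × ℕ} (hc1 : c.1 < a) (hc2 : c.2 < b)
    (hne : ¬(c.1 = a - 1 ∧ c.2 = b - 1)) :
    U c.1 c.2 < U (slideNext a b U c).1 (slideNext a b U c).2 := by
  rcases slideNext_spec (U := U) hc1 hc2 with ⟨h, e⟩ | ⟨h, e⟩ | ⟨h1, h2, e⟩
  · rw [e]; exact hU.2.2.2 c.1 (c.1 + 1) c.2 (by omega) h hc2
  · rw [e]; exact hU.2.2.1 c.1 c.2 (c.2 + 1) hc1 (by omega) h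
  · exact absurd ⟨by omega, by omega⟩ hne

lemma slideNext_down_lt {x y : ℕ} (hy : y + 1 < b)
    (he : slideNext a b U (x, y) = (x + 1, y)) : U (x + 1) y < U x (y + 1) := by
  unfold slideNext at he
  simp only at he
  by_cases h1 : x + 1 < a
  · rw [if_pos h1, if_pos hy] at he
    by_cases h3 : U (x + 1) y < U x (y + 1)
    · exact h3
    · rw [if_neg h3] at he
      have := congrArg Prod.fst he
      simp at this
  · rw [if_neg h1, if_pos hy] at he
    have := congrArg Prod.fst he
    simp at this

lemma slideNext_right_lt (hU : IsSYT a b U) {x y : ℕ} (hx : x + 1 < a) (hy : y < b)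
    (he : slideNext a b U (x, y) = (x, y + 1)) :
    y + 1 < b ∧ U x (y + 1) < U (x + 1) y := by
  have hy1 : y + 1 < b := by
    by_contra h2
    unfold slideNext at he
    simp only at he
    rw [if_pos hx, if_neg h2] at he
    have := congrArg Prod.snd he
    simp at this
  refine ⟨hy1, ?_⟩
  unfold slideNext at he
  simp only at he
  rw [if_pos hx, if_pos hy1] at he
  by_cases h3 : U (x + 1) y < U x (y + 1)
  · rw [if_pos h3] at he
    have := congrArg Prod.fst he
    simp at this
  · have hne : U x (y + 1) ≠ U (x + 1) y := by
      intro h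
      have := syt_inj hU (by omega) hy1 hx hy h
      omega
    omega

lemma promo_row_adj (ha : 0 < a) (hb : 0 < b) (hU : IsSYT a b U) {x y : ℕ}
    (hx : x < a) (hy : y + 1 < b) : promo a b U x y < promo a b U x (y + 1) := by
  have hn : 0 < a * b := Nat.mul_pos ha hb
  have hLnc : ¬(x = a - 1 ∧ y = b - 1) := by omega
  have hyb : y < b := by omega
  by_cases hR : x = a - 1 ∧ y + 1 = b - 1
  · have h2 : promo a b U x (y + 1) = a * b := by rw [hR.1, hR.2]; exact promo_corner ha hb
    rw [h2, promo_nxt (c := (x, y)) hx hyb hLnc]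
    have hg := nxt_grid (U := U) (c := (x, y)) hx hyb
    have h1 := hU.1 _ _ hg.1 hg.2
    omega
  · rw [promo_nxt (c := (x, y)) hx hyb hLnc, promo_nxt (c := (x, y + 1)) hx hy hR]
    have hgL := nxt_grid (U := U) (c := (x, y)) hx hyb
    have hgR := nxt_grid (U := U) (c := (x, y + 1)) hx hy
    have h1L := hU.1 _ _ hgL.1 hgL.2
    have h1R := hU.1 _ _ hgR.1 hgR.2
    have key : U (nxt a b U (x, y)).1 (nxt a b U (x, y)).2
        < U (nxt a b U (x, y + 1)).1 (nxt a b U (x, y + 1)).2 := by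
      by_cases hLp : ∃ s, pth a b U s = (x, y)
      · obtain ⟨s, hs⟩ := hLp
        rw [nxt_onPath ⟨s, hs⟩]
        rcases slideNext_spec (U := U) (c := (x, y)) hx hyb with ⟨hlt, he⟩ | ⟨hlt, he⟩
          | ⟨h1', h2', _⟩
        · -- down step
          have hdl := slideNext_down_lt hy he
          have hRoff : ¬∃ u, pth a b U u = (x, y + 1) := by
            rintro ⟨u, hu⟩
            rcases le_or_gt u s with h | h
            · have hcm := pth_col_mono (U := U) ha hb h
              rw [hu, hs] at hcm
              simp at hcm
            · have hrm := pth_row_mono (U := U) ha hb (show s + 1 ≤ u from h)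
              have hsucc : pth a b U (s + 1) = (x + 1, y) := by rw [pth_succ, hs, he]
              rw [hu, hsucc] at hrm
              simp at hrm
          rw [nxt_offPath hRoff, he]
          exact hdl
        · -- right step: next is exactly (x, y+1)
          have hR' : pth a b U (s + 1) = (x, y + 1) := by rw [pth_succ, hs, he]
          rw [nxt_onPath ⟨s + 1, hR'⟩, he]
          exact slideNext_gt hU (c := (x, y + 1)) hx hy hR
        · omega
      · rw [nxt_offPath hLp]
        have hlt : U x y < U x (y + 1) := hU.2.2.1 x y (y + 1) hx (by omega) hy
        by_cases hRp : ∃ u, pth a b U u = (x, y + 1)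
        · rw [nxt_onPath hRp]
          exact lt_trans hlt (slideNext_gt hU (c := (x, y + 1)) hx hy hR)
        · rw [nxt_offPath hRp]
          exact hlt
    omega
  
lemma promo_col_adj (ha : 0 < a) (hb : 0 < b) (hU : IsSYT a b U) {x y : ℕ}
    (hx : x + 1 < a) (hy : y < b) : promo a b U x y < promo a b U (x + 1) y := by
  have hn : 0 < a * b := Nat.mul_pos ha hb
  have hTnc : ¬(x = a - 1 ∧ y = b - 1) := by omega
  have hxa : x < a := by omega
  by_cases hB : x + 1 = a - 1 ∧ y = b - 1
  · have h2 : promo a b U (x + 1) y = a * b := by rw [hB.1, hB.2]; exact promo_corner ha hb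
    rw [h2, promo_nxt (c := (x, y)) hxa hy hTnc]
    have hg := nxt_grid (U := U) (c := (x, y)) hxa hy
    have h1 := hU.1 _ _ hg.1 hg.2
    omega
  · rw [promo_nxt (c := (x, y)) hxa hy hTnc, promo_nxt (c := (x + 1, y)) hx hy hB]
    have hgL := nxt_grid (U := U) (c := (x, y)) hxa hy
    have hgR := nxt_grid (U := U) (c := (x + 1, y)) hx hy
    have h1L := hU.1 _ _ hgL.1 hgL.2
    have h1R := hU.1 _ _ hgR.1 hgR.2
    have key : U (nxt a b U (x, y)).1 (nxt a b U (x, y)).2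
        < U (nxt a b U (x + 1, y)).1 (nxt a b U (x + 1, y)).2 := by
      by_cases hTp : ∃ s, pth a b U s = (x, y)
      · obtain ⟨s, hs⟩ := hTp
        rw [nxt_onPath ⟨s, hs⟩]
        rcases slideNext_spec (U := U) (c := (x, y)) hxa hy with ⟨hlt, he⟩ | ⟨hlt, he⟩
          | ⟨h1', h2', _⟩
        · -- down step: next is exactly (x+1, y)
          have hB' : pth a b U (s + 1) = (x + 1, y) := by rw [pth_succ, hs, he]
          rw [nxt_onPath ⟨s + 1, hB'⟩, he]
          exact slideNext_gt hU (c := (x + 1, y)) hx hy hB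
        · -- right step
          obtain ⟨hyb1, hdl⟩ := slideNext_right_lt hU hx hy he
          have hBoff : ¬∃ u, pth a b U u = (x + 1, y) := by
            rintro ⟨u, hu⟩
            rcases le_or_gt u s with h | h
            · have hrm := pth_row_mono (U := U) ha hb h
              rw [hu, hs] at hrm
              simp at hrm
            · have hcm := pth_col_mono (U := U) ha hb (show s + 1 ≤ u from h)
              have hsucc : pth a b U (s + 1) = (x, y + 1) := by rw [pth_succ, hs, he]
              rw [hu, hsucc] at hcm
              simp at hcm
          rw [nxt_offPath hBoff, he]
          exact hdl
        · omega
      · rw [nxt_offPath hTp]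
        have hlt : U x y < U (x + 1) y := hU.2.2.2 x (x + 1) y (by omega) hx hy
        by_cases hBp : ∃ u, pth a b U u = (x + 1, y)
        · rw [nxt_onPath hBp]
          exact lt_trans hlt (slideNext_gt hU (c := (x + 1, y)) hx hy hB)
        · rw [nxt_offPath hBp]
          exact hlt
    omega

theorem isSYT_promo (ha : 0 < a) (hb : 0 < b) (hU : IsSYT a b U) :
    IsSYT a b (promo a b U) := by
  have hn : 0 < a * b := Nat.mul_pos ha hb
  refine ⟨?_, ?_, ?_, ?_⟩
  · -- bounds
    intro x y hx hy
    by_cases hcor : x = a - 1 ∧ y = b - 1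
    · rw [hcor.1, hcor.2, promo_corner ha hb]; omega
    · rw [promo_nxt (c := (x, y)) hx hy hcor]
      have hg := nxt_grid (U := U) (c := (x, y)) hx hy
      have h2 := syt_two ha hb hU hg.1 hg.2 (nxt_ne_zero ha hb hx hy hcor)
      have h1 := hU.1 _ _ hg.1 hg.2
      omega
  · -- bijectivity
    intro k hk1 hk2
    by_cases hk : k = a * b
    · refine ⟨(a - 1, b - 1), ⟨by omega, by omega, by rw [promo_corner ha hb, hk]⟩, ?_⟩
      rintro ⟨x, y⟩ ⟨hx, hy, hv⟩
      by_cases hcor : x = a - 1 ∧ y = b - 1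
      · exact Prod.ext hcor.1 hcor.2
      · exfalso
        rw [promo_nxt (c := (x, y)) hx hy hcor] at hv
        have hg := nxt_grid (U := U) (c := (x, y)) hx hy
        have h1 := hU.1 _ _ hg.1 hg.2
        omega
    · have hk' : k < a * b := lt_of_le_of_ne hk2 hk
      obtain ⟨hd1, hd2, hdv⟩ := cellOf_spec hU (show 1 ≤ k + 1 by omega)
        (show k + 1 ≤ a * b by omega)
      have hd0 : ¬((cellOf a b U (k + 1)).1 = 0 ∧ (cellOf a b U (k + 1)).2 = 0) := by
        rintro ⟨h1, h2⟩
        rw [h1, h2, syt_one ha hb hU] at hdv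
        omega
      obtain ⟨c, hcg, hcnc, hcn⟩ := nxt_surj (U := U) ha hb hd1 hd2 hd0
      refine ⟨c, ⟨hcg.1, hcg.2, ?_⟩, ?_⟩
      · rw [promo_nxt hcg.1 hcg.2 hcnc, hcn, hdv]; omega
      · rintro ⟨x, y⟩ ⟨hx, hy, hv⟩
        have hxnc : ¬(x = a - 1 ∧ y = b - 1) := by
          rintro ⟨h1, h2⟩
          rw [h1, h2, promo_corner ha hb] at hv
          omega
        rw [promo_nxt (c := (x, y)) hx hy hxnc] at hv
        have hg := nxt_grid (U := U) (c := (x, y)) hx hy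
        have h1 := hU.1 _ _ hg.1 hg.2
        have hval : U (nxt a b U (x, y)).1 (nxt a b U (x, y)).2 = k + 1 := by omega
        have hnd : nxt a b U (x, y) = cellOf a b U (k + 1) := by
          have := syt_inj hU hg.1 hg.2 hd1 hd2 (hval.trans hdv.symm)
          exact Prod.ext this.1 this.2
        exact nxt_inj ha hb hx hy hxnc hcg.1 hcg.2 hcnc (hnd.trans hcn.symm)
  · -- rows
    intro x y y' hx hyy hy'
    induction y' with
    | zero => omega
    | succ m ih =>
      rcases Nat.lt_succ_iff_lt_or_eq.mp hyy with h' | h'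
      · exact lt_trans (ih h' (by omega)) (promo_row_adj ha hb hU hx hy')
      · rw [h']; exact promo_row_adj ha hb hU hx hy'
  · -- cols
    intro x x' y hxx hx' hy
    induction x' with
    | zero => omega
    | succ m ih =>
      rcases Nat.lt_succ_iff_lt_or_eq.mp hxx with h' | h'
      · exact lt_trans (ih h' (by omega)) (promo_col_adj ha hb hU hx' hy)
      · rw [h']; exact promo_col_adj ha hb hU hx' hy

lemma isSYT_iter (ha : 0 < a) (hb : 0 < b) (hU : IsSYT a b U) :
    ∀ k, IsSYT a b ((promo a b)^[k] U)
  | 0 => hU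
  | k + 1 => by
    rw [Function.iterate_succ_apply']
    exact isSYT_promo ha hb (isSYT_iter ha hb hU k)

end Aux3

section Aux4

variable {a b : ℕ} {U : ℕ → ℕ → ℕ}

lemma track (ha : 0 < a) (hb : 0 < b) (hU : IsSYT a b U) {r c v : ℕ}
    (hr : r < a) (hc : c < b) (hv : U r c = v) (hv2 : 2 ≤ v) :
    ∃ p : ℕ × ℕ, (p.1 < a ∧ p.2 < b) ∧ promo a b U p.1 p.2 = v - 1 ∧
      (p.1 = r ∨ (p.1 + 1 = r ∧ p.2 = c ∧
        ∃ t, pth a b U t = p ∧ slideNext a b U p = (r, c))) := by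
  have hrc0 : ¬(r = 0 ∧ c = 0) := by
    rintro ⟨rfl, rfl⟩
    rw [syt_one ha hb hU] at hv
    omega
  by_cases hp : ∃ s, pth a b U s = (r, c)
  · -- (r, c) is on the path: find a genuine predecessor
    have hpred : ∃ q : ℕ × ℕ, (∃ t, pth a b U t = q) ∧ q ≠ (r, c) ∧
        slideNext a b U q = (r, c) := by
      obtain ⟨s, hs⟩ := hp
      by_cases hcor : r = a - 1 ∧ c = b - 1
      · have hab : 3 ≤ a + b := by
          by_contra hcc
          push_neg at hcc
          exact hrc0 ⟨by omega, by omega⟩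
        refine ⟨pth a b U (a + b - 3), ⟨_, rfl⟩, ?_, ?_⟩
        · intro h
          have hsum := pth_sum (U := U) ha hb (a + b - 3) (by omega)
          rw [h] at hsum
          simp at hsum
          omega
        · rw [← pth_succ, show a + b - 3 + 1 = a + b - 2 from by omega,
            pth_corner ha hb _ le_rfl]
          exact Prod.ext (by simp [hcor.1]) (by simp [hcor.2])
      · have hs0 : s ≠ 0 := by
          rintro rfl
          rw [pth_zero] at hs
          exact hrc0 ⟨(congrArg Prod.fst hs).symm, (congrArg Prod.snd hs).symm⟩
        obtain ⟨u, rfl⟩ := Nat.exists_eq_succ_of_ne_zero hs0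
        by_cases hfix : pth a b U u = (r, c)
        · exfalso
          rw [pth_succ, hfix] at hs
          have := slideNext_fixed (U := U) hr hc hs
          exact hcor ⟨by simpa using this.1, by simpa using this.2⟩
        · exact ⟨pth a b U u, ⟨u, rfl⟩, hfix, by rw [← pth_succ]; exact hs⟩
    obtain ⟨q, ⟨t, hqt⟩, hqne, hqn⟩ := hpred
    have hqg : q.1 < a ∧ q.2 < b := by rw [← hqt]; exact pth_mem ha hb t
    have hqnc : ¬(q.1 = a - 1 ∧ q.2 = b - 1) := by
      rintro ⟨h1, h2⟩
      have hq : q = (a - 1, b - 1) := Prod.ext h1 h2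
      rw [hq, slideNext_corner ha hb] at hqn
      exact hqne (hq.trans hqn)
    refine ⟨q, hqg, ?_, ?_⟩
    · rw [promo_nxt hqg.1 hqg.2 hqnc, nxt_onPath ⟨t, hqt⟩, hqn]
      simp [hv]
    · rcases slideNext_spec (U := U) hqg.1 hqg.2 with ⟨h1, he⟩ | ⟨h1, he⟩ | ⟨h1, h2, he⟩
      · right
        rw [he] at hqn
        have hr1 : q.1 + 1 = r := congrArg Prod.fst hqn
        have hc1 : q.2 = c := congrArg Prod.snd hqn
        exact ⟨hr1, hc1, t, hqt, by rw [he, hqn]⟩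
      · left
        rw [he] at hqn
        exact congrArg Prod.fst hqn
      · exact absurd (he.symm.trans hqn) hqne
  · -- off the path
    have hnc : ¬(r = a - 1 ∧ c = b - 1) := by
      rintro ⟨h1, h2⟩
      exact hp ⟨a + b - 2, by rw [pth_corner ha hb _ le_rfl, h1, h2]⟩
    refine ⟨(r, c), ⟨hr, hc⟩, ?_, Or.inl rfl⟩
    rw [promo_nxt (c := (r, c)) hr hc hnc, nxt_offPath hp]
    simp [hv]

noncomputable def gcell (a b : ℕ) (T : ℕ → ℕ → ℕ) (e k : ℕ) : ℕ × ℕ :=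
  cellOf a b ((promo a b)^[k] T) (e - k)

lemma gcell_spec {T : ℕ → ℕ → ℕ} (ha : 0 < a) (hb : 0 < b) (hT : IsSYT a b T)
    {e k : ℕ} (he2 : e ≤ a * b) (hk : k + 1 ≤ e) :
    (gcell a b T e k).1 < a ∧ (gcell a b T e k).2 < b ∧
      ((promo a b)^[k] T) (gcell a b T e k).1 (gcell a b T e k).2 = e - k :=
  cellOf_spec (isSYT_iter ha hb hT k) (by omega) (by omega)

lemma gcell_step {T : ℕ → ℕ → ℕ} (ha : 0 < a) (hb : 0 < b) (hT : IsSYT a b T)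
    {e k : ℕ} (he2 : e ≤ a * b) (hk : k + 2 ≤ e) :
    (gcell a b T e (k + 1)).1 = (gcell a b T e k).1 ∨
      ((gcell a b T e (k + 1)).1 + 1 = (gcell a b T e k).1 ∧
        (gcell a b T e (k + 1)).2 = (gcell a b T e k).2 ∧
        ∃ t, pth a b ((promo a b)^[k] T) t = gcell a b T e (k + 1) ∧
          slideNext a b ((promo a b)^[k] T) (gcell a b T e (k + 1)) = gcell a b T e k) := by
  have hU := isSYT_iter ha hb hT k
  obtain ⟨h1, h2, h3⟩ := gcell_spec ha hb hT he2 (k := k) (by omega)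
  obtain ⟨p, hpg, hpv, hps⟩ := track ha hb hU h1 h2 h3 (by omega)
  have hg1 : gcell a b T e (k + 1) = p := by
    unfold gcell
    rw [Function.iterate_succ_apply']
    refine (cellOf_eq (isSYT_promo ha hb hU) hpg.1 hpg.2 ?_)
    rw [hpv]
    omega
  rcases hps with h | ⟨hrr, hcc, t, ht1, ht2⟩
  · left; rw [hg1]; exact h
  · right
    rw [hg1]
    refine ⟨hrr, hcc, t, ht1, ?_⟩
    rw [ht2]
  
lemma gcell_row_le {T : ℕ → ℕ → ℕ} (ha : 0 < a) (hb : 0 < b) (hT : IsSYT a b T)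
    {e : ℕ} (he2 : e ≤ a * b) :
    ∀ k, k + 1 ≤ e → (gcell a b T e k).1 ≤ (gcell a b T e 0).1 := by
  intro k
  induction k with
  | zero => intro _; exact le_rfl
  | succ m ih =>
    intro h
    have hm := ih (by omega)
    rcases gcell_step ha hb hT he2 (k := m) (by omega) with h' | ⟨h', -⟩ <;> omega

lemma gcell_last {T : ℕ → ℕ → ℕ} (ha : 0 < a) (hb : 0 < b) (hT : IsSYT a b T)
    {e : ℕ} (he1 : 1 ≤ e) : gcell a b T e (e - 1) = (0, 0) := by
  unfold gcell
  rw [show e - (e - 1) = 1 from by omega]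
  exact cellOf_eq (isSYT_iter ha hb hT _) ha hb (syt_one ha hb (isSYT_iter ha hb hT _))

lemma eq_of_modEq_Icc {n x y : ℕ} (hx1 : 1 ≤ x) (hx2 : x ≤ n) (hy1 : 1 ≤ y) (hy2 : y ≤ n)
    (h : x ≡ y [MOD n]) : x = y := by
  have hm : x % n = y % n := h
  rcases lt_or_eq_of_le hx2 with hx | hx
  · rcases lt_or_eq_of_le hy2 with hy | hy
    · rwa [Nat.mod_eq_of_lt hx, Nat.mod_eq_of_lt hy] at hm
    · rw [hy, Nat.mod_self] at hm
      rw [Nat.mod_eq_of_lt hx] at hm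
      omega
  · rcases lt_or_eq_of_le hy2 with hy | hy
    · rw [hx, Nat.mod_self, Nat.mod_eq_of_lt hy] at hm
      omega
    · omega

lemma modeq_window {n p j e : ℕ} (hp1 : 1 ≤ p) (hp2 : p ≤ n) (hj1 : 1 ≤ j) (hje : j ≤ e)
    (he2 : e ≤ n) (h : e ≡ p + j - 1 [MOD n]) : p + j - 1 = e := by
  by_cases hm : p + j - 1 ≤ n
  · exact (eq_of_modEq_Icc (by omega) he2 (by omega) hm h).symm
  · exfalso
    have h2 : (p + j - 1) % n = (p + j - 1 - n) % n := by
      conv_lhs => rw [show p + j - 1 = (p + j - 1 - n) + n from by omega]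
      rw [Nat.add_mod_right]
    have heq : e = p + j - 1 - n :=
      eq_of_modEq_Icc (by omega) he2 (by omega) (by omega) (h.trans h2)
    omega

end Aux4
/-- **(GPPSS, Theorem 4.7(4).)**  For a standard Young tableau `T` of shape `4 × b` and
`1 ≤ i ≤ 3`, the anti-exceedance set of the `i`-th promotion permutation,
`Aexc(prom_i(T)) = { e : prom_i(T)⁻¹(e) > e }`, equals the set of entries of `T` lying
in the first `i` rows (rows `0,…,i−1` in 0-indexed coordinates). -/
theorem promoPerm_antiExceedance (b i : ℕ) (hi1 : 1 ≤ i) (hi3 : i ≤ 3)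
    (T : ℕ → ℕ → ℕ) (hT : IsSYT 4 b T)
    (σ : ℕ → ℕ) (hσ : promoPermSpec 4 b i T σ) :
    ∀ e : ℕ, (∃ j ∈ Set.Icc 1 (4 * b), σ j = e ∧ e < j) ↔
      (∃ r < i, ∃ c < b, T r c = e) := by
  intro e
  rcases Nat.eq_zero_or_pos b with hb0 | hb
  · subst hb0
    constructor
    · rintro ⟨j, hj, -, -⟩
      rw [Set.mem_Icc] at hj
      omega
    · rintro ⟨r, -, c, hc, -⟩
      omega
  have ha : (0 : ℕ) < 4 := by norm_num
  obtain ⟨hmap, hinj, hsurj⟩ := hσ.1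
  have hspec := hσ.2
  -- the crossing lemma: if the tracked entry moves from row i to row i-1 at step k→k+1,
  -- then σ (k+1) = e
  have hcross : ∀ he1 : 1 ≤ e, ∀ he2 : e ≤ 4 * b, ∀ k, k + 2 ≤ e →
      (gcell 4 b T e (k + 1)).1 + 1 = (gcell 4 b T e k).1 →
      (gcell 4 b T e k).1 = i → σ (k + 1) = e := by
    intro he1 he2 k hk2 hdown hrow
    rcases gcell_step ha hb hT he2 (k := k) hk2 with hflat | ⟨-, hc2, t, ht1, ht2⟩
    · omega
    obtain ⟨t', hA, hB, hC⟩ := hspec (k + 1) (by rw [Set.mem_Icc]; omega)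
    simp only [Nat.add_sub_cancel] at hA hB hC
    have hA' : (slideNext 4 b ((promo 4 b)^[k] T)
        (pth 4 b ((promo 4 b)^[k] T) t')).1 = (pth 4 b ((promo 4 b)^[k] T) t').1 + 1 := hA
    have hB' : (pth 4 b ((promo 4 b)^[k] T) t').1 + 1 = i := hB
    have hmyA : (pth 4 b ((promo 4 b)^[k] T) (t + 1)).1
        = (pth 4 b ((promo 4 b)^[k] T) t).1 + 1 := by
      rw [pth_succ, ht1, ht2]
      omega
    have ht'A : (pth 4 b ((promo 4 b)^[k] T) (t' + 1)).1
        = (pth 4 b ((promo 4 b)^[k] T) t').1 + 1 := by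
      rw [pth_succ]
      exact hA'
    have hrows : (pth 4 b ((promo 4 b)^[k] T) t).1 = (pth 4 b ((promo 4 b)^[k] T) t').1 := by
      rw [ht1]
      omega
    have htt : t = t' := crossing_unique ha hb hmyA ht'A hrows
    rw [← htt] at hB' hC
    obtain ⟨hg1, hg2, hg3⟩ := gcell_spec ha hb hT he2 (k := k) (by omega)
    have hval : ((promo 4 b)^[k] T) i
        (((slideNext 4 b ((promo 4 b)^[k] T))^[t] (0, 0)).2) = e - k := by
      have hcol : (pth 4 b ((promo 4 b)^[k] T) t).2 = (gcell 4 b T e k).2 := by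
        rw [ht1]
        exact hc2
      show ((promo 4 b)^[k] T) i ((pth 4 b ((promo 4 b)^[k] T) t).2) = e - k
      rw [hcol, ← hrow]
      exact hg3
    rw [hval] at hC
    have heq : e - k + (k + 1) - 1 = e := by omega
    rw [heq] at hC
    have hσI : σ (k + 1) ∈ Set.Icc 1 (4 * b) := hmap (by rw [Set.mem_Icc]; omega)
    rw [Set.mem_Icc] at hσI
    exact eq_of_modEq_Icc hσI.1 hσI.2 he1 he2 hC
  constructor
  · -- Aexc → first i rows
    rintro ⟨j, hj, hje, hlt⟩
    have hjI := hj
    rw [Set.mem_Icc] at hjI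
    have heI : e ∈ Set.Icc 1 (4 * b) := hje ▸ hmap hj
    rw [Set.mem_Icc] at heI
    obtain ⟨p, hp, -⟩ := hT.2.1 e heI.1 heI.2
    obtain ⟨hp1, hp2, hp3⟩ := hp
    refine ⟨p.1, ?_, p.2, hp2, hp3⟩
    by_contra hri
    push_neg at hri
    have hg0 : gcell 4 b T e 0 = p := by
      unfold gcell
      rw [Nat.sub_zero, Function.iterate_zero_apply]
      exact (cellOf_eq hT hp1 hp2 hp3).trans rfl
    -- find the crossing step
    have hlast : (gcell 4 b T e (e - 1)).1 = 0 := by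
      rw [gcell_last ha hb hT heI.1]
    have he2' : 2 ≤ e := by
      by_contra h
      push_neg at h
      have h1 : e - 1 = 0 := by omega
      rw [h1, hg0] at hlast
      omega
    have hS : ∃ k, k ≤ e - 1 ∧ (gcell 4 b T e k).1 < i := ⟨e - 1, le_rfl, by omega⟩
    have hk0spec := Nat.find_spec hS
    have hk01 : 1 ≤ Nat.find hS := by
      rcases Nat.eq_zero_or_pos (Nat.find hS) with h | h
      · exfalso
        have := hk0spec
        rw [h, hg0] at this
        omega
      · exact h
    have hprev := Nat.find_min hS (show Nat.find hS - 1 < Nat.find hS from by omega)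
    have hprevrow : i ≤ (gcell 4 b T e (Nat.find hS - 1)).1 := by
      by_contra h
      push_neg at h
      exact hprev ⟨by omega, h⟩
    have hstep := gcell_step ha hb hT heI.2 (k := Nat.find hS - 1)
      (show Nat.find hS - 1 + 2 ≤ e from by omega)
    rw [show Nat.find hS - 1 + 1 = Nat.find hS from by omega] at hstep
    rcases hstep with h | ⟨hdn, -, -⟩
    · omega
    · have hcr := hcross heI.1 heI.2 (Nat.find hS - 1) (by omega)
        (by rw [show Nat.find hS - 1 + 1 = Nat.find hS from by omega]; exact hdn)
        (by omega)
      rw [show Nat.find hS - 1 + 1 = Nat.find hS from by omega] at hcr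
      have hk0I : Nat.find hS ∈ Set.Icc 1 (4 * b) := by rw [Set.mem_Icc]; omega
      have := hinj hk0I hj (hcr.trans hje.symm)
      omega
  · -- first i rows → Aexc
    rintro ⟨r, hri, c, hc, hv⟩
    have hr4 : r < 4 := by omega
    have heI := hT.1 r c hr4 hc
    rw [hv] at heI
    have heIcc : e ∈ Set.Icc 1 (4 * b) := by rw [Set.mem_Icc]; exact heI
    obtain ⟨j, hjmem, hje⟩ := hsurj heIcc
    refine ⟨j, hjmem, hje, ?_⟩
    by_contra hle
    push_neg at hle
    have hjI := hjmem
    rw [Set.mem_Icc] at hjI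
    obtain ⟨t, hA, hB, hC⟩ := hspec j hjmem
    have hU := isSYT_iter ha hb hT (j - 1)
    have hpm : (pth 4 b ((promo 4 b)^[j - 1] T) t).1 < 4 ∧
        (pth 4 b ((promo 4 b)^[j - 1] T) t).2 < b := pth_mem ha hb t
    have hcol : ((slideNext 4 b ((promo 4 b)^[j - 1] T))^[t] (0, 0)).2 < b := hpm.2
    have hpbound := hU.1 i (((slideNext 4 b ((promo 4 b)^[j - 1] T))^[t] (0, 0)).2)
      (by omega) hcol
    set pval := ((promo 4 b)^[j - 1] T) i
      (((slideNext 4 b ((promo 4 b)^[j - 1] T))^[t] (0, 0)).2) with hpval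
    have hCe : e ≡ pval + j - 1 [MOD 4 * b] := hje ▸ hC
    have hpj : pval + j - 1 = e := modeq_window hpbound.1 hpbound.2 hjI.1 hle heI.2 hCe
    have hgj : gcell 4 b T e (j - 1) =
        (i, ((slideNext 4 b ((promo 4 b)^[j - 1] T))^[t] (0, 0)).2) := by
      unfold gcell
      refine cellOf_eq hU (by omega) hcol ?_
      rw [← hpval]
      omega
    have hrow := gcell_row_le ha hb hT heI.2 (j - 1) (by omega)
    have hg0 : gcell 4 b T e 0 = (r, c) := by
      unfold gcell
      rw [Nat.sub_zero, Function.iterate_zero_apply]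
      exact cellOf_eq hT hr4 hc hv
    rw [hgj, hg0] at hrow
    simp only at hrow
    omega
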